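/- Let W be an ℓ×ℓ real positive definite matrix, Γ an ℓ×q real matrix such that Ψ := Γᵀ W⁻¹ Γ is positive definite, V a q×q real positive definite matrix, and z ∈ ℝ^ℓ with c(z) := Ψ⁻¹ Γᵀ W⁻¹ z. If the reconstruction error vanishes, i.e. (z − Γ c(z))ᵀ W⁻¹ (z − Γ c(z)) = 0, then for every e ∈ ℝ^q the field implausibility equals the coefficient implausibility: (z − Γe)ᵀ (Γ V Γᵀ + W)⁻¹ (z − Γe) = (c(z) − e)ᵀ (V + Ψ⁻¹)⁻¹ (c(z) − e). -/

import Mathlib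

open Matrix

/-- If the observations are represented perfectly by the basis (the reconstruction
error vanishes), then the field implausibility coincides with the `W`-projected
coefficient implausibility. -/
theorem zero_reconstruction_error_implausibilities_agree
    {ℓ q : ℕ} (W : Matrix (Fin ℓ) (Fin ℓ) ℝ) (hW : W.PosDef)
    (Γ : Matrix (Fin ℓ) (Fin q) ℝ) (hΨ : (Γᵀ * W⁻¹ * Γ).PosDef)
    (V : Matrix (Fin q) (Fin q) ℝ) (hV : V.PosDef)
    (z : Fin ℓ → ℝ)
    (hR : (z - Γ *ᵥ (((Γᵀ * W⁻¹ * Γ)⁻¹ * Γᵀ * W⁻¹) *ᵥ z)) ⬝ᵥ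
        (W⁻¹ *ᵥ (z - Γ *ᵥ (((Γᵀ * W⁻¹ * Γ)⁻¹ * Γᵀ * W⁻¹) *ᵥ z))) = 0) :
    ∀ e : Fin q → ℝ,
      (z - Γ *ᵥ e) ⬝ᵥ ((Γ * V * Γᵀ + W)⁻¹ *ᵥ (z - Γ *ᵥ e)) =
        ((((Γᵀ * W⁻¹ * Γ)⁻¹ * Γᵀ * W⁻¹) *ᵥ z - e) ⬝ᵥ
          ((V + (Γᵀ * W⁻¹ * Γ)⁻¹)⁻¹ *ᵥ ((((Γᵀ * W⁻¹ * Γ)⁻¹ * Γᵀ * W⁻¹) *ᵥ z) - e))) := by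
  intro e
  set Ψ : Matrix (Fin q) (Fin q) ℝ := Γᵀ * W⁻¹ * Γ with hΨdef
  set c : Fin q → ℝ := ((Γᵀ * W⁻¹ * Γ)⁻¹ * Γᵀ * W⁻¹) *ᵥ z with hc
  set S : Matrix (Fin ℓ) (Fin ℓ) ℝ := Γ * V * Γᵀ + W with hS
  -- positive definiteness facts
  have hWinv : (W⁻¹).PosDef := hW.inv
  have hΨinv : (Ψ⁻¹).PosDef := hΨ.inv
  have hVΨ : (V + Ψ⁻¹).PosDef := hV.add_posSemidef hΨinv.posSemidef
  have hSpd : S.PosDef := by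
    have h1 : (Γ * V * Γᵀ).PosSemidef := by
      have := hV.posSemidef.mul_mul_conjTranspose_same Γ
      simpa [conjTranspose_eq_transpose_of_trivial] using this
    rw [hS]
    exact Matrix.PosDef.posSemidef_add h1 hW
  -- invertibility
  have hWu : IsUnit W.det := isUnit_iff_ne_zero.mpr hW.det_pos.ne'
  have hΨu : IsUnit Ψ.det := isUnit_iff_ne_zero.mpr hΨ.det_pos.ne'
  have hSu : IsUnit S.det := isUnit_iff_ne_zero.mpr hSpd.det_pos.ne'
  have hVΨu : IsUnit (V + Ψ⁻¹).det := isUnit_iff_ne_zero.mpr hVΨ.det_pos.ne'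
  -- z = Γ c
  have hz : z = Γ *ᵥ c := by
    by_contra h
    have hne : z - Γ *ᵥ c ≠ 0 := sub_ne_zero.mpr h
    have := hWinv.dotProduct_mulVec_pos (x := z - Γ *ᵥ c) hne
    simp only [star_trivial] at this
    exact absurd hR (by linarith)
  -- key matrix identity
  have hWW : W⁻¹ * W = 1 := nonsing_inv_mul W hWu
  have hΨΨ : Ψ * Ψ⁻¹ = 1 := mul_nonsing_inv Ψ hΨu
  have hfact : Ψ * V + 1 = Ψ * (V + Ψ⁻¹) := by rw [mul_add, hΨΨ]
  have hPu : IsUnit (Ψ * V + 1).det := by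
    rw [hfact, det_mul]; exact hΨu.mul hVΨu
  have h1 : (Ψ * V + 1) * Γᵀ = Γᵀ * W⁻¹ * S := by
    simp only [hS, hΨdef, Matrix.mul_add, Matrix.add_mul, Matrix.one_mul,
      Matrix.mul_assoc, hWW, Matrix.mul_one]
  have h2 : Γᵀ * S⁻¹ = (Ψ * V + 1)⁻¹ * (Γᵀ * W⁻¹) := by
    have key : (Ψ * V + 1) * (Γᵀ * S⁻¹) = Γᵀ * W⁻¹ := by
      rw [← Matrix.mul_assoc, h1, Matrix.mul_assoc, mul_nonsing_inv S hSu, Matrix.mul_one]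
    calc Γᵀ * S⁻¹ = (Ψ * V + 1)⁻¹ * ((Ψ * V + 1) * (Γᵀ * S⁻¹)) := by
          rw [← Matrix.mul_assoc, nonsing_inv_mul _ hPu, Matrix.one_mul]
      _ = (Ψ * V + 1)⁻¹ * (Γᵀ * W⁻¹) := by rw [key]
  have h3 : Γᵀ * S⁻¹ * Γ = (V + Ψ⁻¹)⁻¹ := by
    rw [h2, Matrix.mul_assoc ((Ψ * V + 1)⁻¹) (Γᵀ * W⁻¹) Γ, ← hΨdef, hfact,
      Matrix.mul_inv_rev Ψ (V + Ψ⁻¹), Matrix.mul_assoc, nonsing_inv_mul Ψ hΨu, Matrix.mul_one]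
  -- finish
  have hsub : z - Γ *ᵥ e = Γ *ᵥ (c - e) := by
    rw [hz, ← mulVec_sub]
  rw [hsub, dotProduct_mulVec, ← vecMul_transpose, vecMul_vecMul,
    ← dotProduct_mulVec, vecMul_transpose, mulVec_mulVec, h3]
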